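/- Let G be an abelian group, let e₀, e₁, e₂ ∈ G, let S = {e₀ + e₁, e₁ + e₂, e₂ + e₀}, and define the relation r on G by r(x, y) if and only if there exist s ∈ S and t ∈ S with x + s = y + t. Then for every x ∈ G one has r(x, x + e₁ − e₀), r(x, x + e₂ − e₁), and r(x, x + e₀ − e₂). Moreover, if e₁ − e₀ has infinite order in G, then the equivalence class of x under the equivalence relation generated by r is an infinite set. -/

import Mathlib

/-- In an abelian group `G` with `S = {e₀+e₁, e₁+e₂, e₂+e₀}` and the relation
`r x y ↔ ∃ s, t ∈ S, x + s = y + t`, every `x` satisfies `r x (x + e₁ − e₀)`,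
`r x (x + e₂ − e₁)` and `r x (x + e₀ − e₂)`; and if `e₁ − e₀` has infinite order,
the equivalence class of `x` under the equivalence relation generated by `r` is
infinite. -/
theorem stmt12 (G : Type*) [AddCommGroup G] (e₀ e₁ e₂ : G)
    (S : Set G) (hS : S = {e₀ + e₁, e₁ + e₂, e₂ + e₀})
    (r : G → G → Prop) (hr : ∀ x y : G, r x y ↔ ∃ s ∈ S, ∃ t ∈ S, x + s = y + t) :
    (∀ x : G, r x (x + e₁ - e₀) ∧ r x (x + e₂ - e₁) ∧ r x (x + e₀ - e₂)) ∧
    ((∀ n : ℤ, n ≠ 0 → n • (e₁ - e₀) ≠ 0) →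
      ∀ x : G, {y : G | Relation.EqvGen r x y}.Infinite) := by
  subst hS
  have hstep : ∀ x : G, r x (x + (e₁ - e₀)) := by
    intro x
    rw [hr]
    exact ⟨e₁ + e₂, by simp [Set.mem_insert_iff], e₂ + e₀, by simp [Set.mem_insert_iff],
      by abel⟩
  constructor
  · intro x
    refine ⟨by have := hstep x; rwa [show x + (e₁ - e₀) = x + e₁ - e₀ by abel] at this, ?_, ?_⟩
    · rw [hr]
      exact ⟨e₂ + e₀, by simp [Set.mem_insert_iff], e₀ + e₁, by simp [Set.mem_insert_iff],
        by abel⟩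
    · rw [hr]
      exact ⟨e₀ + e₁, by simp [Set.mem_insert_iff], e₁ + e₂, by simp [Set.mem_insert_iff],
        by abel⟩
  · intro hord x
    have hmem : ∀ n : ℤ, Relation.EqvGen r x (x + n • (e₁ - e₀)) := by
      intro n
      induction n using Int.induction_on with
      | zero => simpa using Relation.EqvGen.refl x
      | succ k ih =>
          refine Relation.EqvGen.trans _ _ _ ih ?_
          have := hstep (x + (k : ℤ) • (e₁ - e₀))
          have h2 : x + (k : ℤ) • (e₁ - e₀) + (e₁ - e₀) = x + ((k : ℤ) + 1) • (e₁ - e₀) := by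
            rw [add_smul, one_smul]; abel
          rw [h2] at this
          exact Relation.EqvGen.rel _ _ this
      | pred k ih =>
          refine Relation.EqvGen.trans _ _ _ ih ?_
          refine Relation.EqvGen.symm _ _ (Relation.EqvGen.rel _ _ ?_)
          have := hstep (x + (-(k : ℤ) - 1) • (e₁ - e₀))
          have h2 : x + (-(k : ℤ) - 1) • (e₁ - e₀) + (e₁ - e₀) = x + (-(k : ℤ)) • (e₁ - e₀) := by
            rw [sub_smul, one_smul]; abel
          rw [h2] at this
          exact this
    have hinj : Function.Injective fun n : ℤ => x + n • (e₁ - e₀) := by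
      intro a b hab
      have hab' : a • (e₁ - e₀) = b • (e₁ - e₀) := by
        have := add_left_cancel hab
        exact this
      by_contra hne
      have : (a - b) • (e₁ - e₀) = 0 := by
        rw [sub_smul, hab', sub_self]
      exact hord (a - b) (sub_ne_zero.mpr hne) this
    exact Set.infinite_of_injective_forall_mem hinj fun n => hmem n
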